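/- Let E be a Hausdorff locally convex topological real vector space, let K ⊆ E be a nonempty compact convex subset, and let ∂K denote the set of extreme points of K. Let Y be a topological space and R ⊆ Y × K a subset whose image under the first projection is all of Y; for y ∈ Y set λ(y) := {x ∈ K : (y,x) ∈ R}. Assume that for every y ∈ Y, λ(y) equals the closure of the convex hull of λ(y) ∩ ∂K. Then the map (y,x) ↦ y from R (with the subspace topology of Y × E) to Y is open if and only if the map (y,x) ↦ y from R ∩ (Y × ∂K) (with the subspace topology) to Y is open. -/

import Mathlib

set_option linter.unusedSectionVars false
set_option linter.unusedVariables false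
set_option maxHeartbeats 1000000

open Set Filter Topology

section Aux

variable {E : Type*} [AddCommGroup E] [Module ℝ E] [TopologicalSpace E]
  [IsTopologicalAddGroup E] [ContinuousSMul ℝ E]

/-- The convex join of two compact sets is compact. -/
lemma aux_isCompact_convexJoin {s t : Set E} (hs : IsCompact s) (ht : IsCompact t) :
    IsCompact (convexJoin ℝ s t) := by
  have heq : convexJoin ℝ s t =
      (fun p : ℝ × E × E => (1 - p.1) • p.2.1 + p.1 • p.2.2) ''
        (Set.Icc (0:ℝ) 1 ×ˢ s ×ˢ t) := by
    ext x
    constructor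
    · intro hx
      obtain ⟨a, ha, b, hb, hseg⟩ := mem_convexJoin.1 hx
      rw [segment_eq_image] at hseg
      obtain ⟨θ, hθ, hθx⟩ := hseg
      exact ⟨(θ, a, b), ⟨hθ, ha, hb⟩, hθx⟩
    · rintro ⟨⟨θ, a, b⟩, ⟨hθ, ha, hb⟩, rfl⟩
      refine mem_convexJoin.2 ⟨a, ha, b, hb, ?_⟩
      rw [segment_eq_image]
      exact ⟨θ, hθ, rfl⟩
  rw [heq]
  have : Continuous (fun p : ℝ × E × E => (1 - p.1) • p.2.1 + p.1 • p.2.2) := by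
    apply Continuous.add
    · exact ((continuous_const.sub continuous_fst).smul (continuous_fst.comp continuous_snd))
    · exact continuous_fst.smul (continuous_snd.comp continuous_snd)
  exact ((isCompact_Icc.prod (hs.prod ht))).image this

/-- The convex hull of a finite union of nonempty convex compact sets is compact. -/
lemma aux_isCompact_convexHull_biUnion {ι : Type*} (s : Finset ι) (C : ι → Set E)
    (hcomp : ∀ i ∈ s, IsCompact (C i)) (hconv : ∀ i ∈ s, Convex ℝ (C i))
    (hne : ∀ i ∈ s, (C i).Nonempty) :
    IsCompact (convexHull ℝ (⋃ i ∈ s, C i)) := by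
  classical
  induction s using Finset.induction_on with
  | empty => simp
  | @insert a s ha ih =>
    have hun : (⋃ i ∈ insert a s, C i) = C a ∪ ⋃ i ∈ s, C i := by
      simp [Set.iUnion_iUnion_eq_or_left]
    rw [hun]
    rcases s.eq_empty_or_nonempty with rfl | hsne
    · simp only [Finset.notMem_empty, Set.iUnion_of_empty, Set.iUnion_empty, Set.union_empty]
      rw [(hconv a (Finset.mem_insert_self a ∅)).convexHull_eq]
      exact hcomp a (Finset.mem_insert_self a ∅)
    · obtain ⟨b, hb⟩ := hsne
      have hBne : (⋃ i ∈ s, C i).Nonempty := by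
        obtain ⟨x, hx⟩ := hne b (Finset.mem_insert_of_mem hb)
        exact ⟨x, Set.mem_biUnion hb hx⟩
      have hane : (C a).Nonempty := hne a (Finset.mem_insert_self a s)
      rw [convexHull_union hane hBne]
      rw [(hconv a (Finset.mem_insert_self a s)).convexHull_eq]
      exact aux_isCompact_convexJoin (hcomp a (Finset.mem_insert_self a s))
        (ih (fun i hi => hcomp i (Finset.mem_insert_of_mem hi))
            (fun i hi => hconv i (Finset.mem_insert_of_mem hi))
            (fun i hi => hne i (Finset.mem_insert_of_mem hi)))

/-- An extreme point of `K` lying in the convex hull of a finite union of convex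
subsets of `K` lies in one of them. -/
lemma aux_extreme_mem {K : Set E} (hKconv : Convex ℝ K) {x : E} (hx : x ∈ K.extremePoints ℝ)
    {ι : Type*} (s : Finset ι) (C : ι → Set E) (hCK : ∀ i ∈ s, C i ⊆ K)
    (hconv : ∀ i ∈ s, Convex ℝ (C i))
    (hmem : x ∈ convexHull ℝ (⋃ i ∈ s, C i)) : ∃ i ∈ s, x ∈ C i := by
  classical
  induction s using Finset.induction_on with
  | empty => simp at hmem
  | @insert a s ha ih =>
    have hun : (⋃ i ∈ insert a s, C i) = C a ∪ ⋃ i ∈ s, C i := by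
      simp [Set.iUnion_iUnion_eq_or_left]
    rw [hun] at hmem
    rcases Set.eq_empty_or_nonempty (C a) with hae | hane
    · rw [hae, Set.empty_union] at hmem
      obtain ⟨i, hi, hxi⟩ := ih (fun i hi => hCK i (Finset.mem_insert_of_mem hi))
        (fun i hi => hconv i (Finset.mem_insert_of_mem hi)) hmem
      exact ⟨i, Finset.mem_insert_of_mem hi, hxi⟩
    rcases Set.eq_empty_or_nonempty (⋃ i ∈ s, C i) with hBe | hBne
    · rw [hBe, Set.union_empty,
        (hconv a (Finset.mem_insert_self a s)).convexHull_eq] at hmem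
      exact ⟨a, Finset.mem_insert_self a s, hmem⟩
    · rw [convexHull_union hane hBne] at hmem
      obtain ⟨u, hu, v, hv, hseg⟩ := mem_convexJoin.1 hmem
      rw [(hconv a (Finset.mem_insert_self a s)).convexHull_eq] at hu
      have huK : u ∈ K := hCK a (Finset.mem_insert_self a s) hu
      have hvK : v ∈ K := by
        have : convexHull ℝ (⋃ i ∈ s, C i) ⊆ K := by
          apply convexHull_min _ hKconv
          exact Set.iUnion₂_subset fun i hi => hCK i (Finset.mem_insert_of_mem hi)
        exact this hv
      rcases (mem_extremePoints_iff_forall_segment.1 hx).2 u huK v hvK hseg with rfl | rfl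
      · exact ⟨a, Finset.mem_insert_self a s, hu⟩
      · obtain ⟨i, hi, hxi⟩ := ih (fun i hi => hCK i (Finset.mem_insert_of_mem hi))
          (fun i hi => hconv i (Finset.mem_insert_of_mem hi)) hv
        exact ⟨i, Finset.mem_insert_of_mem hi, hxi⟩


/-- A Milman-type theorem: an extreme point of a compact convex set `K` which is not in a
closed subset `D ⊆ K` is not in the closed convex hull of `D`. -/
lemma aux_milman [LocallyConvexSpace ℝ E] [T2Space E] {K D : Set E}
    (hK : IsCompact K) (hKconv : Convex ℝ K) (hD : IsClosed D) (hDK : D ⊆ K)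
    {x : E} (hx : x ∈ K.extremePoints ℝ) (hxD : x ∉ D) :
    x ∉ closure (convexHull ℝ D) := by
  intro hxC
  apply hxD
  rw [← hD.closure_eq, mem_closure_iff_nhds]
  intro N hN
  -- W₀ : preimage of N under (x + ·)
  have hW₀ : (fun w => x + w) ⁻¹' N ∈ 𝓝 (0 : E) := by
    have : Continuous (fun w : E => x + w) := continuous_const.add continuous_id
    exact this.continuousAt.preimage_mem_nhds (by simpa using hN)
  set W₀ : Set E := (fun w => x + w) ⁻¹' N with hW₀def
  obtain ⟨W₁, hW₁, hW₁add⟩ := exists_nhds_zero_half hW₀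
  -- convex neighborhood V' ⊆ W₁
  obtain ⟨V', ⟨hV'mem, hV'conv⟩, hV'sub⟩ :=
    (LocallyConvexSpace.convex_basis_zero ℝ E).mem_iff.1 hW₁
  set V : Set E := V' ∩ (fun v : E => -v) ⁻¹' V' with hVdef
  have hVmem : V ∈ 𝓝 (0 : E) := by
    refine Filter.inter_mem hV'mem ?_
    have : Continuous (fun v : E => -v) := continuous_neg
    exact this.continuousAt.preimage_mem_nhds (by simpa using hV'mem)
  have hVconv : Convex ℝ V := hV'conv.inter (by
    intro a ha b hb p q hp hq hpq
    simp only [Set.mem_preimage] at *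
    have := hV'conv ha hb hp hq hpq
    simpa [smul_neg, neg_add, add_comm] using this)
  have hVsymm : ∀ v ∈ V, -v ∈ V := by
    rintro v ⟨h1, h2⟩
    exact ⟨h2, by simpa using h1⟩
  have hVsub : V ⊆ W₁ := fun v hv => hV'sub hv.1
  have h0V : (0 : E) ∈ V := mem_of_mem_nhds hVmem
  -- compact D, cover by translates of V
  have hDcomp : IsCompact D := hK.of_isClosed_subset hD hDK
  set U : E → Set E := fun d => (fun v => d + v) '' V with hUdef
  have hUnhds : ∀ d ∈ D, U d ∈ 𝓝 d := by
    intro d _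
    have h1 : (fun v => d + v) '' V ∈ Filter.map (Homeomorph.addLeft d) (𝓝 0) :=
      Filter.image_mem_map hVmem
    rw [(Homeomorph.addLeft d).map_nhds_eq] at h1
    rw [show ((Homeomorph.addLeft d) (0:E)) = d from by simp] at h1
    exact h1
  obtain ⟨t, htD, hcover⟩ := hDcomp.elim_nhds_subcover U hUnhds
  have hUconv : ∀ d : E, Convex ℝ (U d) := fun d => hVconv.translate d
  -- the pieces
  set C : E → Set E := fun d => closure (convexHull ℝ (D ∩ U d)) with hCdef
  have hCK : ∀ d ∈ t, C d ⊆ K :=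
    fun d _ => closure_minimal (convexHull_min (fun z hz => hDK hz.1) hKconv) hK.isClosed
  have hCcomp : ∀ d ∈ t, IsCompact (C d) :=
    fun d hd => hK.of_isClosed_subset isClosed_closure (hCK d hd)
  have hCconv : ∀ d ∈ t, Convex ℝ (C d) := fun d _ => (convex_convexHull ℝ _).closure
  have hCne : ∀ d ∈ t, (C d).Nonempty := by
    intro d hd
    refine ⟨d, subset_closure (subset_convexHull ℝ _ ⟨htD d hd, ?_⟩)⟩
    exact ⟨0, h0V, by simp⟩
  -- the big compact convex hull
  have hBcomp : IsCompact (convexHull ℝ (⋃ d ∈ t, C d)) :=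
    aux_isCompact_convexHull_biUnion t C hCcomp hCconv hCne
  have hxB : x ∈ convexHull ℝ (⋃ d ∈ t, C d) := by
    have hsub : closure (convexHull ℝ D) ⊆ convexHull ℝ (⋃ d ∈ t, C d) := by
      apply closure_minimal _ hBcomp.isClosed
      apply convexHull_mono
      intro z hz
      obtain ⟨s, ⟨d, rfl⟩, hzs⟩ := hcover hz
      simp only [Set.mem_iUnion, exists_prop] at hzs ⊢
      obtain ⟨hd, hzU⟩ := hzs
      exact ⟨d, hd, subset_closure (subset_convexHull ℝ _ ⟨hz, hzU⟩)⟩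
    exact hsub hxC
  obtain ⟨d, hdt, hxd⟩ := aux_extreme_mem hKconv hx t C hCK hCconv hxB
  -- x ∈ C d ⊆ closure (U d)
  have hxU : x ∈ closure (U d) :=
    closure_mono (convexHull_min Set.inter_subset_right (hUconv d)) hxd
  -- the neighborhood x + V of x meets U d
  have hM : (fun v => x + v) '' V ∈ 𝓝 x := by
    have h1 : (fun v => x + v) '' V ∈ Filter.map (Homeomorph.addLeft x) (𝓝 0) :=
      Filter.image_mem_map hVmem
    rw [(Homeomorph.addLeft x).map_nhds_eq] at h1
    rw [show ((Homeomorph.addLeft x) (0:E)) = x from by simp] at h1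
    exact h1
  obtain ⟨z, hzM, hzU⟩ := mem_closure_iff_nhds.1 hxU _ hM
  obtain ⟨v₁, hv₁, rfl⟩ := hzM
  obtain ⟨v₂, hv₂, hdv⟩ := hzU
  -- x + v₁ = d + v₂, so d = x + (v₁ + (-v₂)) ∈ N
  have h' : d + v₂ = x + v₁ := hdv
  have hdeq : d = x + (v₁ + -v₂) := by
    have h'' := eq_sub_of_add_eq h'
    rw [h'']; abel
  refine ⟨d, ?_, htD d hdt⟩
  rw [hdeq]
  exact hW₁add v₁ (hVsub hv₁) (-v₂) (hVsub (hVsymm v₂ hv₂))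

/-- The projection of a relation onto `Y` is an open map iff the preimage condition holds for
all open sets. -/
lemma aux_key {Y : Type*} [TopologicalSpace Y] {Z : Type*} [TopologicalSpace Z]
    (S : Set (Y × Z)) :
    IsOpenMap (fun z : S => z.1.1) ↔
      ∀ U : Set Z, IsOpen U → IsOpen {y : Y | ∃ x ∈ U, (y, x) ∈ S} := by
  constructor
  · intro h U hU
    have ho : IsOpen (Subtype.val ⁻¹' ((Set.univ : Set Y) ×ˢ U) : Set S) :=
      (isOpen_univ.prod hU).preimage continuous_subtype_val
    have := h _ ho
    have heq : (fun z : S => z.1.1) '' (Subtype.val ⁻¹' ((Set.univ : Set Y) ×ˢ U)) =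
        {y : Y | ∃ x ∈ U, (y, x) ∈ S} := by
      ext y
      constructor
      · rintro ⟨⟨⟨y', x⟩, hzS⟩, hz, rfl⟩
        exact ⟨x, hz.2, hzS⟩
      · rintro ⟨x, hxU, hxS⟩
        exact ⟨⟨(y, x), hxS⟩, ⟨trivial, hxU⟩, rfl⟩
    rwa [heq] at this
  · intro h
    rw [isOpenMap_iff_nhds_le]
    rintro ⟨⟨y, x⟩, hz⟩
    intro W hW
    rw [Filter.mem_map] at hW
    rw [nhds_subtype] at hW
    obtain ⟨O, hO, hOsub⟩ := hW
    obtain ⟨V, U, hVopen, hyV, hUopen, hxU, hVU⟩ := mem_nhds_prod_iff'.1 hO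
    have hT : IsOpen (V ∩ {y : Y | ∃ x ∈ U, (y, x) ∈ S}) := hVopen.inter (h U hUopen)
    have hyT : y ∈ V ∩ {y : Y | ∃ x ∈ U, (y, x) ∈ S} := ⟨hyV, x, hxU, hz⟩
    refine Filter.mem_of_superset (hT.mem_nhds hyT) ?_
    rintro y' ⟨hy'V, x', hx'U, hx'S⟩
    have : (⟨(y', x'), hx'S⟩ : S) ∈ Subtype.val ⁻¹' O := hVU ⟨hy'V, hx'U⟩
    exact hOsub this

end Aux

/-- Let `K` be a nonempty compact convex subset of a Hausdorff locally convex real topological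
vector space, `∂K` its set of extreme points, and `R ⊆ Y × K` a relation with full projection
onto `Y` whose fibers `λ(y)` are closed convex hulls of `λ(y) ∩ ∂K`.  Then the projection from
`R` to `Y` is open iff the projection from `R ∩ (Y × ∂K)` to `Y` is open. -/
theorem stmt9 {E : Type*} [AddCommGroup E] [Module ℝ E] [TopologicalSpace E]
    [IsTopologicalAddGroup E] [ContinuousSMul ℝ E] [LocallyConvexSpace ℝ E] [T2Space E]
    {Y : Type*} [TopologicalSpace Y]
    (K : Set E) (hK : IsCompact K) (hKconv : Convex ℝ K) (hKne : K.Nonempty)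
    (R : Set (Y × E)) (hRK : ∀ z ∈ R, z.2 ∈ K)
    (hR : ∀ y : Y, ∃ x : E, (y, x) ∈ R)
    (hfaces : ∀ y : Y, {x : E | (y, x) ∈ R} =
      closure (convexHull ℝ ({x : E | (y, x) ∈ R} ∩ K.extremePoints ℝ))) :
    IsOpenMap (fun z : R => z.1.1) ↔
      IsOpenMap
        (fun z : (R ∩ (Set.univ ×ˢ K.extremePoints ℝ) : Set (Y × E)) => z.1.1) := by
  classical
  rw [aux_key, aux_key]
  have hmemR' : ∀ y : Y, ∀ x : E,
      ((y, x) ∈ (R ∩ (Set.univ ×ˢ K.extremePoints ℝ) : Set (Y × E))) ↔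
        ((y, x) ∈ R ∧ x ∈ K.extremePoints ℝ) := by
    intro y x
    constructor
    · rintro ⟨h1, -, h2⟩; exact ⟨h1, h2⟩
    · rintro ⟨h1, h2⟩; exact ⟨h1, trivial, h2⟩
  constructor
  · -- projection from R open → projection from R' open
    intro hP U hU
    rw [isOpen_iff_mem_nhds]
    rintro y₀ ⟨x₀, hx₀U, hx₀R'⟩
    obtain ⟨hx₀R, hx₀ext⟩ := (hmemR' y₀ x₀).1 hx₀R'
    have hDclosed : IsClosed (K \ U) := hK.isClosed.sdiff hU
    have hx₀D : x₀ ∉ K \ U := fun h => h.2 hx₀U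
    have hx₀C := aux_milman hK hKconv hDclosed Set.diff_subset hx₀ext hx₀D
    set Cl : Set E := closure (convexHull ℝ (K \ U)) with hCl
    have hG : IsOpen {y : Y | ∃ x ∈ Clᶜ, (y, x) ∈ R} :=
      hP _ isClosed_closure.isOpen_compl
    have hy₀G : y₀ ∈ {y : Y | ∃ x ∈ Clᶜ, (y, x) ∈ R} := ⟨x₀, hx₀C, hx₀R⟩
    refine Filter.mem_of_superset (hG.mem_nhds hy₀G) ?_
    rintro y ⟨x, hxC, hxR⟩
    by_contra hne
    simp only [Set.mem_setOf_eq, not_exists, not_and] at hne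
    have hsub : {x : E | (y, x) ∈ R} ∩ K.extremePoints ℝ ⊆ K \ U := by
      rintro x' ⟨hx'R, hx'ext⟩
      refine ⟨extremePoints_subset hx'ext, fun hx'U => ?_⟩
      exact hne x' hx'U ((hmemR' y x').2 ⟨hx'R, hx'ext⟩)
    have : x ∈ Cl := by
      have hxmem : x ∈ {x : E | (y, x) ∈ R} := hxR
      rw [hfaces y] at hxmem
      exact closure_mono (convexHull_mono hsub) hxmem
    exact hxC this
  · -- projection from R' open → projection from R open
    intro hP U hU
    rw [isOpen_iff_mem_nhds]
    rintro y₀ ⟨x₀, hx₀U, hx₀R⟩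
    -- x₀ lies in the closure of the convex hull of λ'(y₀)
    have hx₀cl : x₀ ∈ closure (convexHull ℝ ({x : E | (y₀, x) ∈ R} ∩ K.extremePoints ℝ)) := by
      rw [← hfaces y₀]; exact hx₀R
    obtain ⟨p, hpU, hpconv⟩ := mem_closure_iff_nhds.1 hx₀cl U (hU.mem_nhds hx₀U)
    rw [convexHull_eq] at hpconv
    obtain ⟨ι, t, w, z, hw₀, hw₁, hz, hcm⟩ := hpconv
    rw [Finset.centerMass_eq_of_sum_1 _ _ hw₁] at hcm
    -- the summation map is continuous
    set g : (ι → E) → E := fun v => ∑ i ∈ t, w i • v i with hg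
    have hgcont : Continuous g :=
      continuous_finset_sum _ fun i _ => (continuous_apply i).const_smul (w i)
    have hgz : g z ∈ U := by rw [hg]; simpa [hcm] using hpU
    have hopen : IsOpen (g ⁻¹' U) := hU.preimage hgcont
    obtain ⟨I, u, hIu, hIsub⟩ := isOpen_pi_iff.1 hopen z hgz
    set O : ι → Set E := fun i => if i ∈ I then u i else Set.univ with hO
    have hOopen : ∀ i, IsOpen (O i) := by
      intro i; rw [hO]; dsimp only
      split
      · exact (hIu i (by assumption)).1
      · exact isOpen_univ
    have hzO : ∀ i, z i ∈ O i := by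
      intro i; rw [hO]; dsimp only
      split
      · exact (hIu i (by assumption)).2
      · trivial
    set T : Set Y := ⋂ i ∈ t, {y : Y | ∃ x ∈ O i, (y, x) ∈
      (R ∩ (Set.univ ×ˢ K.extremePoints ℝ) : Set (Y × E))} with hT
    have hTopen : IsOpen T := isOpen_biInter_finset fun i _ => hP (O i) (hOopen i)
    have hy₀T : y₀ ∈ T := by
      rw [hT]
      refine Set.mem_iInter₂.2 fun i hi => ?_
      exact ⟨z i, hzO i, (hmemR' y₀ (z i)).2 ⟨(hz i hi).1, (hz i hi).2⟩⟩
    refine Filter.mem_of_superset (hTopen.mem_nhds hy₀T) ?_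
    intro y hyT
    have hchoice : ∀ i : ι, ∃ x : E,
        (i ∈ t → (x ∈ O i ∧ (y, x) ∈ R ∧ x ∈ K.extremePoints ℝ)) ∧ (i ∉ t → x = z i) := by
      intro i
      by_cases hi : i ∈ t
      · obtain ⟨x, hxO, hxR'⟩ := Set.mem_iInter₂.1 hyT i hi
        obtain ⟨h1, h2⟩ := (hmemR' y x).1 hxR'
        exact ⟨x, fun _ => ⟨hxO, h1, h2⟩, fun h => absurd hi h⟩
      · exact ⟨z i, fun h => absurd h hi, fun _ => rfl⟩
    choose v hv using hchoice
    have hvpi : v ∈ (I : Set ι).pi u := by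
      intro i hiI
      by_cases hi : i ∈ t
      · have h2 : v i ∈ if i ∈ I then u i else Set.univ := ((hv i).1 hi).1
        rwa [if_pos (Finset.mem_coe.1 hiI)] at h2
      · rw [(hv i).2 hi]
        exact (hIu i (Finset.mem_coe.1 hiI)).2
    have hgv : g v ∈ U := hIsub hvpi
    have hgvconv : g v ∈ convexHull ℝ ({x : E | (y, x) ∈ R} ∩ K.extremePoints ℝ) := by
      have := t.centerMass_mem_convexHull (w := w) (z := v)
        (s := {x : E | (y, x) ∈ R} ∩ K.extremePoints ℝ) hw₀ (by rw [hw₁]; norm_num)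
        (fun i hi => ⟨((hv i).1 hi).2.1, ((hv i).1 hi).2.2⟩)
      rwa [Finset.centerMass_eq_of_sum_1 _ _ hw₁] at this
    have hgvR : (y, g v) ∈ R := by
      have : g v ∈ {x : E | (y, x) ∈ R} := by
        rw [hfaces y]
        exact subset_closure hgvconv
      exact this
    exact ⟨g v, hgv, hgvR⟩
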